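/- Let H : ℝ → ℝ be continuous and coercive and let A = (p_α)_{α∈I} be a set limiter for H. Then the A-limited flux function F_A is well defined, i.e. whenever p ∈ [p_α⁻, p_α⁺] ∩ [p_β⁻, p_β⁺] for α, β ∈ I one has H(p_α) = H(p_β); moreover F_A is continuous on ℝ and non-increasing on ℝ. -/
import Mathlib


open Set Filter Topology

/-- `p⁻ = sup {q < p : H(q) ≥ H(p)}`. -/
noncomputable def pminus (H : ℝ → ℝ) (p : ℝ) : ℝ :=
  sSup {q : ℝ | q < p ∧ H p ≤ H q}

/-- `p⁺ = inf {q > p : H(q) ≤ H(p)}`, with `inf ∅ = +∞` (extended reals). -/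
noncomputable def pplus (H : ℝ → ℝ) (p : ℝ) : EReal :=
  sInf (Real.toEReal '' {q : ℝ | p < q ∧ H q ≤ H p})

/-- `H(p) → +∞` as `|p| → +∞`. -/
def Coercive (H : ℝ → ℝ) : Prop :=
  Tendsto H atTop atTop ∧ Tendsto H atBot atTop

/-- `F(p) → +∞` as `p → -∞`. -/
def SemiCoercive (F : ℝ → ℝ) : Prop := Tendsto F atBot atTop

/-- the open interval `(a⁻, a⁺)` (upper endpoint possibly `+∞`). -/
def ooMM (H : ℝ → ℝ) (a : ℝ) : Set ℝ :=
  {r : ℝ | pminus H a < r ∧ (r : EReal) < pplus H a}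

/-- the open interval `(p, p⁺)` (upper endpoint possibly `+∞`). -/
def ooUp (H : ℝ → ℝ) (p : ℝ) : Set ℝ :=
  {r : ℝ | p < r ∧ (r : EReal) < pplus H p}

/-- the closed interval `[a⁻, a⁺]` (upper endpoint possibly `+∞`). -/
def ccMM (H : ℝ → ℝ) (a : ℝ) : Set ℝ :=
  {r : ℝ | pminus H a ≤ r ∧ (r : EReal) ≤ pplus H a}

/-- `A` is a set limiter for `H`. -/
def IsSetLimiter (H : ℝ → ℝ) (A : Set ℝ) : Prop :=
  (∀ a ∈ A, (pminus H a : EReal) ≠ pplus H a) ∧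
  (∀ a ∈ A, ∀ b ∈ A, a < b → H b ≤ H a) ∧
  (∀ p : ℝ, pminus H p < p → ∃ a ∈ A, (Ioo (pminus H p) p ∩ ooMM H a).Nonempty) ∧
  (∀ p : ℝ, (p : EReal) < pplus H p → ∃ a ∈ A, (ooUp H p ∩ ooMM H a).Nonempty)

open Classical in
/-- The `A`-limited flux function `F_A`: equal to `H(a)` on `[a⁻, a⁺]` for `a ∈ A`,
and to `H` elsewhere. -/
noncomputable def limFlux (H : ℝ → ℝ) (A : Set ℝ) (p : ℝ) : ℝ :=
  if h : ∃ a, a ∈ A ∧ p ∈ ccMM H a then H h.choose else H p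

/-- Condition (S) in the definition of `A_F`. -/
def CondS (H F : ℝ → ℝ) (p : ℝ) : Prop :=
  pminus H p ≠ p ∧ H p ≤ F p ∧
    ∀ q : ℝ, H q ≤ F q → (ooMM H q ∩ Ioo (pminus H p) p).Nonempty → H q ≤ H p

/-- Condition (T) in the definition of `A_F`. -/
def CondT (H F : ℝ → ℝ) (p : ℝ) : Prop :=
  (p : EReal) ≠ pplus H p ∧ F p ≤ H p ∧
    ∀ q : ℝ, F q ≤ H q → (ooMM H q ∩ ooUp H p).Nonempty → H p ≤ H q

/-- The set `A_F` associated with a boundary function `F`. -/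
def limiterOf (H F : ℝ → ℝ) : Set ℝ := {p : ℝ | CondS H F p ∨ CondT H F p}
section Basics

variable (H : ℝ → ℝ)

lemma pminus_set_nonempty (hcoer : Coercive H) (p : ℝ) :
    {q : ℝ | q < p ∧ H p ≤ H q}.Nonempty := by
  obtain ⟨q, hq1, hq2⟩ := ((hcoer.2.eventually_ge_atTop (H p)).and (eventually_lt_atBot p)).exists
  exact ⟨q, hq2, hq1⟩

lemma pminus_bddAbove (p : ℝ) : BddAbove {q : ℝ | q < p ∧ H p ≤ H q} :=
  ⟨p, fun _ hq => hq.1.le⟩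

lemma pminus_le (hcoer : Coercive H) (p : ℝ) : pminus H p ≤ p :=
  csSup_le (pminus_set_nonempty H hcoer p) (fun _ hq => hq.1.le)

lemma lt_of_pminus_lt (p q : ℝ) (h1 : pminus H p < q) (h2 : q < p) : H q < H p := by
  by_contra h
  push_neg at h
  exact absurd (le_csSup (pminus_bddAbove H p) ⟨h2, h⟩) (not_le.2 h1)

lemma H_pminus (hH : Continuous H) (hcoer : Coercive H) (p : ℝ) :
    H (pminus H p) = H p := by
  have hge : H p ≤ H (pminus H p) := by
    have hmem : pminus H p ∈ closure {q : ℝ | q < p ∧ H p ≤ H q} :=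
      csSup_mem_closure (pminus_set_nonempty H hcoer p) (pminus_bddAbove H p)
    have hsub : closure {q : ℝ | q < p ∧ H p ≤ H q} ⊆ {q | H p ≤ H q} :=
      closure_minimal (fun _ hq => hq.2) (isClosed_le continuous_const hH)
    exact hsub hmem
  rcases eq_or_lt_of_le (pminus_le H hcoer p) with h | h
  · rw [h]
  · refine le_antisymm ?_ hge
    have tends : Tendsto H (𝓝[>] (pminus H p)) (𝓝 (H (pminus H p))) :=
      (hH.tendsto _).mono_left nhdsWithin_le_nhds
    refine le_of_tendsto tends ?_
    filter_upwards [Ioo_mem_nhdsGT_of_mem (⟨le_refl _, h⟩ : pminus H p ∈ Ico (pminus H p) p)]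
      with q hq
    exact (lt_of_pminus_lt H p q hq.1 hq.2).le

lemma self_le_pplus (p : ℝ) : (p : EReal) ≤ pplus H p := by
  refine le_sInf ?_
  rintro _ ⟨q, hq, rfl⟩
  exact_mod_cast hq.1.le

lemma pplus_le (p q : ℝ) (h1 : p < q) (h2 : H q ≤ H p) : pplus H p ≤ (q : EReal) :=
  sInf_le ⟨q, ⟨h1, h2⟩, rfl⟩

lemma lt_of_lt_pplus (p q : ℝ) (h1 : p < q) (h2 : (q : EReal) < pplus H p) : H p < H q := by
  by_contra h
  push_neg at h
  exact absurd (pplus_le H p q h1 h) (not_le.2 h2)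

lemma H_pplus (hH : Continuous H) (p r : ℝ) (hpr : p < r) (h : pplus H p = (r : EReal)) :
    H r = H p := by
  have hle : H r ≤ H p := by
    have hcl : r ∈ closure {q : ℝ | p < q ∧ H q ≤ H p} := by
      rw [Metric.mem_closure_iff]
      intro ε hε
      have h1 : sInf (Real.toEReal '' {q : ℝ | p < q ∧ H q ≤ H p}) < ((r + ε : ℝ) : EReal) := by
        rw [show sInf (Real.toEReal '' {q : ℝ | p < q ∧ H q ≤ H p}) = pplus H p from rfl, h]
        exact_mod_cast lt_add_of_pos_right r hε
      obtain ⟨x, hx, hxlt⟩ := sInf_lt_iff.1 h1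
      obtain ⟨q, hq, rfl⟩ := hx
      have hq1 : q < r + ε := by exact_mod_cast hxlt
      have hq2 : r ≤ q := by
        have : (r : EReal) ≤ (q : EReal) := h ▸ sInf_le ⟨q, hq, rfl⟩
        exact_mod_cast this
      refine ⟨q, hq, ?_⟩
      rw [Real.dist_eq, abs_sub_comm, abs_of_nonneg (sub_nonneg.2 hq2)]
      linarith
    exact closure_minimal (fun _ hq => hq.2) (isClosed_le hH continuous_const) hcl
  refine le_antisymm hle ?_
  have tends : Tendsto H (𝓝[<] r) (𝓝 (H r)) := (hH.tendsto _).mono_left nhdsWithin_le_nhds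
  refine ge_of_tendsto tends ?_
  filter_upwards [Ioo_mem_nhdsLT_of_mem (⟨hpr, le_refl r⟩ : r ∈ Ioc p r)] with q hq
  refine (lt_of_lt_pplus H p q hq.1 ?_).le
  rw [h]
  exact_mod_cast hq.2

end Basics
section Main

variable (H : ℝ → ℝ)

lemma wd_key (hH : Continuous H) (hcoer : Coercive H) (A : Set ℝ) (hA : IsSetLimiter H A)
    (a b : ℝ) (ha : a ∈ A) (hb : b ∈ A) (hab : a < b)
    (hov : ((pminus H b : ℝ) : EReal) ≤ pplus H a) : H a = H b := by
  by_contra hne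
  have hba : H b ≤ H a := hA.2.1 a ha b hb hab
  have hba' : H b < H a := lt_of_le_of_ne hba (fun h => hne h.symm)
  have ham : a ≤ pminus H b := le_csSup (pminus_bddAbove H b) ⟨hab, hba'.le⟩
  have hpb : pplus H a ≤ (b : EReal) := pplus_le H a b hab hba'.le
  have hne_top : pplus H a ≠ ⊤ := ne_top_of_le_ne_top (EReal.coe_ne_top b) hpb
  have hne_bot : pplus H a ≠ ⊥ :=
    ((EReal.bot_lt_coe a).trans_le (self_le_pplus H a)).ne'
  set u := (pplus H a).toReal with hu
  have hue : ((u : ℝ) : EReal) = pplus H a := EReal.coe_toReal hne_top hne_bot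
  have hau : a ≤ u := by exact_mod_cast hue ▸ self_le_pplus H a
  have hub : u ≤ b := by exact_mod_cast hue ▸ hpb
  have hmu : pminus H b ≤ u := by exact_mod_cast hue ▸ hov
  have hHm : H (pminus H b) = H b := H_pminus H hH hcoer b
  rcases eq_or_lt_of_le (pminus_le H hcoer b) with hmb | hmb
  · -- pminus H b = b, so u = b, a < u, H u = H a
    have hub' : b ≤ u := hmb ▸ hmu
    have : u = b := le_antisymm hub hub'
    have hab' : a < u := this ▸ hab
    have := H_pplus H hH a u hab' hue.symm
    exact hne (by rw [← ‹u = b›]; exact this.symm)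
  · rcases eq_or_lt_of_le ham with ham' | ham'
    · exact hne (by rw [ham', hHm])
    · rcases eq_or_lt_of_le hmu with hmu' | hmu'
      · -- pminus H b = u
        rcases eq_or_lt_of_le hau with hau' | hau'
        · exact absurd (hau' ▸ hmu' ▸ ham') (lt_irrefl _)
        · have := H_pplus H hH a u hau' hue.symm
          rw [← hmu', hHm] at this
          exact hne this.symm
      · -- pminus H b ∈ (a, u): H a < H (pminus H b)
        have : ((pminus H b : ℝ) : EReal) < pplus H a := by
          rw [← hue]; exact_mod_cast hmu'
        have := lt_of_lt_pplus H a (pminus H b) ham' this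
        rw [hHm] at this
        linarith

lemma wd (hH : Continuous H) (hcoer : Coercive H) (A : Set ℝ) (hA : IsSetLimiter H A)
    (p : ℝ) (a : ℝ) (ha : a ∈ A) (b : ℝ) (hb : b ∈ A)
    (hpa : p ∈ ccMM H a) (hpb : p ∈ ccMM H b) : H a = H b := by
  rcases lt_trichotomy a b with h | h | h
  · refine wd_key H hH hcoer A hA a b ha hb h ?_
    exact le_trans (by exact_mod_cast hpb.1) hpa.2
  · rw [h]
  · refine (wd_key H hH hcoer A hA b a hb ha h ?_).symm
    exact le_trans (by exact_mod_cast hpa.1) hpb.2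

lemma limFlux_eq (hH : Continuous H) (hcoer : Coercive H) (A : Set ℝ) (hA : IsSetLimiter H A)
    (p : ℝ) (a : ℝ) (ha : a ∈ A) (hpa : p ∈ ccMM H a) : limFlux H A p = H a := by
  have h : ∃ c, c ∈ A ∧ p ∈ ccMM H c := ⟨a, ha, hpa⟩
  rw [limFlux, dif_pos h]
  exact wd H hH hcoer A hA p _ h.choose_spec.1 a ha h.choose_spec.2 hpa

lemma limFlux_eq_self (A : Set ℝ) (p : ℝ) (h : ¬∃ c, c ∈ A ∧ p ∈ ccMM H c) :
    limFlux H A p = H p := by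
  rw [limFlux, dif_neg h]

lemma Tlem (hH : Continuous H) (c q : ℝ) (hcq : c ≤ q) (hv : H c < H q) :
    ∃ t, c ≤ t ∧ t < q ∧ H t = H c ∧ (q : EReal) < pplus H t := by
  set K := Icc c q ∩ {r | H r ≤ H c} with hK
  have hKc : IsCompact K := isCompact_Icc.inter_right (isClosed_le hH continuous_const)
  have hKne : K.Nonempty := ⟨c, ⟨le_refl c, hcq⟩, show H c ≤ H c from le_refl _⟩
  set t := sSup K with ht
  have htK : t ∈ K := hKc.sSup_mem hKne
  have hmax : ∀ r ∈ K, r ≤ t := fun r hr => le_csSup hKc.bddAbove hr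
  have hct : c ≤ t := htK.1.1
  have htq : t < q := lt_of_le_of_ne htK.1.2 (by
    intro h
    rw [h] at htK
    exact absurd htK.2 (not_le.2 hv))
  have hup : ∀ r, t < r → r ≤ q → H c < H r := by
    intro r h1 h2
    by_contra hcon
    push_neg at hcon
    exact absurd (hmax r ⟨⟨hct.trans h1.le, h2⟩, hcon⟩) (not_le.2 h1)
  have hHt : H t = H c := by
    refine le_antisymm htK.2 ?_
    have tends : Tendsto H (𝓝[>] t) (𝓝 (H t)) := (hH.tendsto t).mono_left nhdsWithin_le_nhds
    refine ge_of_tendsto tends ?_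
    filter_upwards [Ioo_mem_nhdsGT_of_mem (⟨le_refl t, htq⟩ : t ∈ Ico t q)] with r hr
    exact (hup r hr.1 hr.2.le).le
  have hopen : {y | H c < H y} ∈ 𝓝 q := (isOpen_lt continuous_const hH).mem_nhds hv
  obtain ⟨ε, hε, hball⟩ := Metric.mem_nhds_iff.1 hopen
  refine ⟨t, hct, htq, hHt, ?_⟩
  have h2 : ((q + ε / 2 : ℝ) : EReal) ≤ pplus H t := by
    refine le_sInf ?_
    rintro x ⟨r, ⟨hr1, hr2⟩, rfl⟩
    rw [EReal.coe_le_coe_iff]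
    by_contra hcon
    push_neg at hcon
    rcases le_or_gt r q with h | h
    · exact absurd (hup r hr1 h) (not_lt.2 (hr2.trans hHt.le))
    · have : H c < H r := hball (by
        rw [Metric.mem_ball, Real.dist_eq, abs_of_pos (by linarith)]
        linarith)
      exact absurd (hr2.trans hHt.le) (not_le.2 this)
  refine lt_of_lt_of_le ?_ h2
  exact_mod_cast (by linarith : q < q + ε / 2)

lemma C3lem (hH : Continuous H) (hcoer : Coercive H) (A : Set ℝ) (hA : IsSetLimiter H A)
    (b p : ℝ) (hb : b ∈ A) (hp : ∀ c ∈ A, p ∉ ccMM H c)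
    (hpb : p < pminus H b) (hHpb : H p < H b) : False := by
  set m := pminus H b with hm
  have hmb : m ≤ b := pminus_le H hcoer b
  have hHm : H m = H b := H_pminus H hH hcoer b
  set K := Icc p m ∩ {r | H b ≤ H r} with hK
  have hKc : IsCompact K := isCompact_Icc.inter_right (isClosed_le continuous_const hH)
  have hKne : K.Nonempty := ⟨m, ⟨hpb.le, le_refl m⟩, hHm.ge⟩
  set t := sInf K with ht
  have htK : t ∈ K := hKc.sInf_mem hKne
  have hmin : ∀ r ∈ K, t ≤ r := fun r hr => csInf_le hKc.bddBelow hr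
  have hpt : p < t := lt_of_le_of_ne htK.1.1 (by
    intro h
    rw [← h] at htK
    exact absurd htK.2 (not_le.2 hHpb))
  have htm : t ≤ m := htK.1.2
  have hbt : H b ≤ H t := htK.2
  have hdown : ∀ r, p ≤ r → r < t → H r < H b := by
    intro r h1 h2
    by_contra hcon
    push_neg at hcon
    exact absurd (hmin r ⟨⟨h1, h2.le.trans htm⟩, hcon⟩) (not_le.2 h2)
  have hHt : H t = H b := by
    refine le_antisymm ?_ hbt
    have tends : Tendsto H (𝓝[<] t) (𝓝 (H t)) := (hH.tendsto t).mono_left nhdsWithin_le_nhds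
    refine le_of_tendsto tends ?_
    filter_upwards [Ioo_mem_nhdsLT_of_mem (⟨hpt, le_refl t⟩ : t ∈ Ioc p t)] with r hr
    exact (hdown r hr.1.le hr.2).le
  have hopen : {y | H y < H b} ∈ 𝓝 p := (isOpen_lt hH continuous_const).mem_nhds hHpb
  obtain ⟨ε, hε, hball⟩ := Metric.mem_nhds_iff.1 hopen
  have htminus : pminus H t ≤ p - ε / 2 := by
    refine csSup_le (pminus_set_nonempty H hcoer t) ?_
    rintro r ⟨hr1, hr2⟩
    have hrb : H b ≤ H r := hHt ▸ hr2
    have hrp : r < p := by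
      by_contra hcon
      push_neg at hcon
      exact absurd (hmin r ⟨⟨hcon, hr1.le.trans htm⟩, hrb⟩) (not_le.2 hr1)
    by_contra hcon
    push_neg at hcon
    have : H r < H b := hball (by
      rw [Metric.mem_ball, Real.dist_eq, abs_of_neg (by linarith)]
      linarith)
    exact absurd hrb (not_le.2 this)
  have hlt : pminus H t < t := htminus.trans_lt (by linarith)
  obtain ⟨c, hc, x, hx1, hx2⟩ := hA.2.2.1 t hlt
  have hxlt : x < t := hx1.2
  have hxgt : pminus H t < x := hx1.1
  have hcx : pminus H c < x := hx2.1
  have hxc : (x : EReal) < pplus H c := hx2.2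
  by_cases hc1 : pminus H c ≤ p
  · -- then pplus H c < p
    have hc2 : pplus H c < (p : EReal) := by
      by_contra hcon
      push_neg at hcon
      exact hp c hc ⟨hc1, hcon⟩
    have hne_top : pplus H c ≠ ⊤ := ne_top_of_le_ne_top (EReal.coe_ne_top p) hc2.le
    have hne_bot : pplus H c ≠ ⊥ := ((EReal.bot_lt_coe c).trans_le (self_le_pplus H c)).ne'
    set e := (pplus H c).toReal with he
    have hee : ((e : ℝ) : EReal) = pplus H c := EReal.coe_toReal hne_top hne_bot
    have hce : c ≤ e := by exact_mod_cast hee ▸ self_le_pplus H c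
    have hep : e < p := by exact_mod_cast hee ▸ hc2
    have hxe : x < e := by exact_mod_cast hee ▸ hxc
    have hHe : H e = H c := by
      rcases eq_or_lt_of_le hce with h | h
      · rw [← h]
      · exact H_pplus H hH c e h hee.symm
    have hec : H e < H t := lt_of_pminus_lt H t e (hxgt.trans hxe) (hep.trans hpt)
    rw [hHe, hHt] at hec
    have hcb : c < b := lt_of_le_of_lt hce (hep.trans (hpt.trans_le (htm.trans hmb)))
    exact absurd (hA.2.1 c hc b hb hcb) (not_le.2 hec)
  · push_neg at hc1
    have hcm : pminus H c < t := hcx.trans hxlt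
    have hcgt : pminus H t < pminus H c := lt_of_le_of_lt htminus (by linarith)
    have h1 : H (pminus H c) < H t := lt_of_pminus_lt H t (pminus H c) hcgt hcm
    rw [H_pminus H hH hcoer c, hHt] at h1
    rcases lt_trichotomy b c with h | h | h
    · -- b ∈ (pminus H c, c)
      have hcb' : pminus H c < b := hcm.trans_le (htm.trans hmb)
      exact absurd (lt_of_pminus_lt H c b hcb' h) (not_lt.2 h1.le)
    · rw [h] at h1; exact absurd h1 (lt_irrefl _)
    · exact absurd (hA.2.1 c hc b hb h) (not_le.2 h1)

lemma C2lem (hH : Continuous H) (hcoer : Coercive H) (A : Set ℝ) (hA : IsSetLimiter H A)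
    (a q : ℝ) (ha : a ∈ A) (hq : ∀ c ∈ A, q ∉ ccMM H c)
    (haq : pplus H a < (q : EReal)) (hHaq : H a < H q) : False := by
  have hne_top : pplus H a ≠ ⊤ := ne_top_of_le_ne_top (EReal.coe_ne_top q) haq.le
  have hne_bot : pplus H a ≠ ⊥ := ((EReal.bot_lt_coe a).trans_le (self_le_pplus H a)).ne'
  set c := (pplus H a).toReal with hcdef
  have hce : ((c : ℝ) : EReal) = pplus H a := EReal.coe_toReal hne_top hne_bot
  have hac : a ≤ c := by exact_mod_cast hce ▸ self_le_pplus H a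
  have hcq : c < q := by exact_mod_cast hce ▸ haq
  have hHc : H c = H a := by
    rcases eq_or_lt_of_le hac with h | h
    · rw [← h]
    · exact H_pplus H hH a c h hce.symm
  obtain ⟨t, hct, htq, hHt, hqt⟩ := Tlem H hH c q hcq.le (hHc ▸ hHaq)
  have htt : (t : EReal) < pplus H t := lt_trans (by exact_mod_cast htq) hqt
  obtain ⟨b, hb, x, hx1, hx2⟩ := hA.2.2.2 t htt
  have htx : t < x := hx1.1
  have hxt : (x : EReal) < pplus H t := hx1.2
  have hbx : pminus H b < x := hx2.1
  have hxb : (x : EReal) < pplus H b := hx2.2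
  by_cases hb1 : pminus H b ≤ q
  · -- pplus H b < q
    have hb2 : pplus H b < (q : EReal) := by
      by_contra hcon
      push_neg at hcon
      exact hq b hb ⟨hb1, hcon⟩
    have hbne_top : pplus H b ≠ ⊤ := ne_top_of_le_ne_top (EReal.coe_ne_top q) hb2.le
    have hbne_bot : pplus H b ≠ ⊥ := ((EReal.bot_lt_coe b).trans_le (self_le_pplus H b)).ne'
    set d := (pplus H b).toReal with hddef
    have hde : ((d : ℝ) : EReal) = pplus H b := EReal.coe_toReal hbne_top hbne_bot
    have hbd : b ≤ d := by exact_mod_cast hde ▸ self_le_pplus H b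
    have hdq : d < q := by exact_mod_cast hde ▸ hb2
    have hxd : x < d := by exact_mod_cast hde ▸ hxb
    have hHd : H d = H b := by
      rcases eq_or_lt_of_le hbd with h | h
      · rw [← h]
      · exact H_pplus H hH b d h hde.symm
    have h1 : H t < H d := lt_of_lt_pplus H t d (htx.trans hxd)
      (lt_trans (by exact_mod_cast hdq) hqt)
    rw [hHd, hHt, hHc] at h1
    rcases lt_trichotomy a b with h | h | h
    · exact absurd (hA.2.1 a ha b hb h) (not_le.2 h1)
    · rw [h] at h1; exact absurd h1 (lt_irrefl _)
    · -- b < a, a ∈ (b, d)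
      have had : a < d := lt_of_le_of_lt (hac.trans hct) (htx.trans hxd)
      have : (a : EReal) < pplus H b := by rw [← hde]; exact_mod_cast had
      exact absurd (lt_of_lt_pplus H b a h this) (not_lt.2 h1.le)
  · push_neg at hb1
    have hmx : pminus H b < x := hbx
    have h1 : H t < H (pminus H b) := lt_of_lt_pplus H t (pminus H b)
      (htq.trans hb1) (lt_trans (by exact_mod_cast hbx) hxt)
    rw [H_pminus H hH hcoer b, hHt, hHc] at h1
    have hab : a < b := lt_of_le_of_lt (hac.trans hct)
      ((htq.trans hb1).trans_le (pminus_le H hcoer b))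
    exact absurd (hA.2.1 a ha b hb hab) (not_le.2 h1)

lemma limFlux_antitone (hH : Continuous H) (hcoer : Coercive H) (A : Set ℝ)
    (hA : IsSetLimiter H A) : Antitone (limFlux H A) := by
  intro p q hpq
  rcases eq_or_lt_of_le hpq with rfl | hpq
  · exact le_refl _
  by_cases hcp : ∃ c, c ∈ A ∧ p ∈ ccMM H c
  · obtain ⟨a, ha, hpa⟩ := hcp
    rw [limFlux_eq H hH hcoer A hA p a ha hpa]
    by_cases hcq : ∃ c, c ∈ A ∧ q ∈ ccMM H c
    · obtain ⟨b, hb, hqb⟩ := hcq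
      rw [limFlux_eq H hH hcoer A hA q b hb hqb]
      by_cases hov : ((pminus H b : ℝ) : EReal) ≤ pplus H a
      · -- overlap: common point z
        set z := max (pminus H a) (pminus H b) with hz
        have hza : z ∈ ccMM H a := by
          refine ⟨le_max_left _ _, ?_⟩
          rcases max_choice (pminus H a) (pminus H b) with h | h <;> rw [← hz] at h <;> rw [h]
          · exact le_trans (by exact_mod_cast hpa.1) hpa.2
          · exact hov
        have hzb : z ∈ ccMM H b := by
          refine ⟨le_max_right _ _, ?_⟩
          rcases max_choice (pminus H a) (pminus H b) with h | h <;> rw [← hz] at h <;> rw [h]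
          · exact le_trans (by exact_mod_cast hpa.1.trans hpq.le) hqb.2
          · exact le_trans (by exact_mod_cast pminus_le H hcoer b) (self_le_pplus H b)
        exact (wd H hH hcoer A hA z a ha b hb hza hzb).ge
      · push_neg at hov
        have hne_top : pplus H a ≠ ⊤ := ne_top_of_le_ne_top (EReal.coe_ne_top _) hov.le
        have hne_bot : pplus H a ≠ ⊥ := ((EReal.bot_lt_coe a).trans_le (self_le_pplus H a)).ne'
        set u := (pplus H a).toReal with hu
        have hue : ((u : ℝ) : EReal) = pplus H a := EReal.coe_toReal hne_top hne_bot
        have hau : a ≤ u := by exact_mod_cast hue ▸ self_le_pplus H a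
        have hub : u < pminus H b := by exact_mod_cast hue ▸ hov
        have hab : a < b := lt_of_le_of_lt hau (hub.trans_le (pminus_le H hcoer b))
        exact hA.2.1 a ha b hb hab
    · rw [limFlux_eq_self H A q hcq]
      by_contra hcon
      push_neg at hcon
      have hquncov : ∀ c ∈ A, q ∉ ccMM H c := by
        intro c hc hqc; exact hcq ⟨c, hc, hqc⟩
      have haq : pplus H a < (q : EReal) := by
        by_contra h
        push_neg at h
        exact hquncov a ha ⟨hpa.1.trans hpq.le, h⟩
      exact C2lem H hH hcoer A hA a q ha hquncov haq hcon
  · rw [limFlux_eq_self H A p hcp]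
    have hpuncov : ∀ c ∈ A, p ∉ ccMM H c := by
      intro c hc hpc; exact hcp ⟨c, hc, hpc⟩
    by_cases hcq : ∃ c, c ∈ A ∧ q ∈ ccMM H c
    · obtain ⟨b, hb, hqb⟩ := hcq
      rw [limFlux_eq H hH hcoer A hA q b hb hqb]
      by_contra hcon
      push_neg at hcon
      have hppb : (p : EReal) ≤ pplus H b :=
        le_trans (by exact_mod_cast hpq.le) hqb.2
      have hpb : p < pminus H b := by
        by_contra h
        push_neg at h
        exact hpuncov b hb ⟨h, hppb⟩
      exact C3lem H hH hcoer A hA b p hb hpuncov hpb hcon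
    · rw [limFlux_eq_self H A q hcq]
      by_contra hcon
      push_neg at hcon
      have hquncov : ∀ c ∈ A, q ∉ ccMM H c := by
        intro c hc hqc; exact hcq ⟨c, hc, hqc⟩
      obtain ⟨t, hpt, htq, hHt, hqt⟩ := Tlem H hH p q hpq.le hcon
      have htt : (t : EReal) < pplus H t := lt_trans (by exact_mod_cast htq) hqt
      obtain ⟨b, hb, x, hx1, hx2⟩ := hA.2.2.2 t htt
      have htx : t < x := hx1.1
      have hxt : (x : EReal) < pplus H t := hx1.2
      have hbx : pminus H b < x := hx2.1
      have hxb : (x : EReal) < pplus H b := hx2.2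
      by_cases hb1 : pminus H b ≤ q
      · have hb2 : pplus H b < (q : EReal) := by
          by_contra h
          push_neg at h
          exact hquncov b hb ⟨hb1, h⟩
        have hbne_top : pplus H b ≠ ⊤ := ne_top_of_le_ne_top (EReal.coe_ne_top q) hb2.le
        have hbne_bot : pplus H b ≠ ⊥ := ((EReal.bot_lt_coe b).trans_le (self_le_pplus H b)).ne'
        set d := (pplus H b).toReal with hddef
        have hde : ((d : ℝ) : EReal) = pplus H b := EReal.coe_toReal hbne_top hbne_bot
        have hbd : b ≤ d := by exact_mod_cast hde ▸ self_le_pplus H b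
        have hdq : d < q := by exact_mod_cast hde ▸ hb2
        have hxd : x < d := by exact_mod_cast hde ▸ hxb
        have hHd : H d = H b := by
          rcases eq_or_lt_of_le hbd with h | h
          · rw [← h]
          · exact H_pplus H hH b d h hde.symm
        have h1 : H t < H d := lt_of_lt_pplus H t d (htx.trans hxd)
          (lt_trans (by exact_mod_cast hdq) hqt)
        rw [hHd, hHt] at h1
        have hpd : (p : EReal) ≤ pplus H b := by
          rw [← hde]
          exact_mod_cast (hpt.trans_lt (htx.trans hxd)).le
        have hpmb : p < pminus H b := by
          by_contra h
          push_neg at h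
          exact hpuncov b hb ⟨h, hpd⟩
        exact C3lem H hH hcoer A hA b p hb hpuncov hpmb h1
      · push_neg at hb1
        have h1 : H t < H (pminus H b) := lt_of_lt_pplus H t (pminus H b)
          (htq.trans hb1) (lt_trans (by exact_mod_cast hbx) hxt)
        rw [H_pminus H hH hcoer b, hHt] at h1
        have hpmb : p < pminus H b := (hpt.trans_lt htq).trans hb1
        exact C3lem H hH hcoer A hA b p hb hpuncov hpmb h1

lemma left_pt (hH : Continuous H) (hcoer : Coercive H) (A : Set ℝ) (hA : IsSetLimiter H A)
    (p : ℝ) (ε : ℝ) (hε : 0 < ε) :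
    ∃ x, x < p ∧ limFlux H A x ≤ limFlux H A p + ε := by
  by_cases h1 : ∃ a, a ∈ A ∧ p ∈ ccMM H a ∧ pminus H a < p
  · obtain ⟨a, ha, hpa, hlt⟩ := h1
    set x := (pminus H a + p) / 2 with hx
    have hx1 : pminus H a ≤ x := by rw [hx]; linarith
    have hx2 : x < p := by rw [hx]; linarith
    have hxa : x ∈ ccMM H a :=
      ⟨hx1, le_trans (by exact_mod_cast hx2.le) hpa.2⟩
    refine ⟨x, hx2, ?_⟩
    rw [limFlux_eq H hH hcoer A hA x a ha hxa, limFlux_eq H hH hcoer A hA p a ha hpa]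
    linarith
  · push_neg at h1
    have hFp : limFlux H A p = H p := by
      by_cases hc : ∃ c, c ∈ A ∧ p ∈ ccMM H c
      · obtain ⟨a, ha, hpa⟩ := hc
        rw [limFlux_eq H hH hcoer A hA p a ha hpa]
        have heq : pminus H a = p := le_antisymm hpa.1 (h1 a ha hpa)
        rw [← heq, H_pminus H hH hcoer a]
      · exact limFlux_eq_self H A p hc
    obtain ⟨δ, hδ, hδ2⟩ := Metric.continuousAt_iff.1 hH.continuousAt ε hε
    set x := p - δ / 2 with hxdef
    have hxp : x < p := by rw [hxdef]; linarith
    refine ⟨x, hxp, ?_⟩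
    rw [hFp]
    by_cases hcx : ∃ c, c ∈ A ∧ x ∈ ccMM H c
    · obtain ⟨c, hc, hxc⟩ := hcx
      rw [limFlux_eq H hH hcoer A hA x c hc hxc]
      have hclt : pplus H c < (p : EReal) := by
        by_contra hcon
        push_neg at hcon
        have hpc : p ∈ ccMM H c := ⟨hxc.1.trans hxp.le, hcon⟩
        exact absurd ((h1 c hc hpc).trans_lt (hxc.1.trans_lt hxp)) (lt_irrefl p)
      have hne_top : pplus H c ≠ ⊤ := ne_top_of_le_ne_top (EReal.coe_ne_top p) hclt.le
      have hne_bot : pplus H c ≠ ⊥ := ((EReal.bot_lt_coe c).trans_le (self_le_pplus H c)).ne'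
      set e := (pplus H c).toReal with he
      have hee : ((e : ℝ) : EReal) = pplus H c := EReal.coe_toReal hne_top hne_bot
      have hce : c ≤ e := by exact_mod_cast hee ▸ self_le_pplus H c
      have hxe : x ≤ e := by exact_mod_cast hee ▸ hxc.2
      have hep : e < p := by exact_mod_cast hee ▸ hclt
      have hHe : H e = H c := by
        rcases eq_or_lt_of_le hce with h | h
        · rw [← h]
        · exact H_pplus H hH c e h hee.symm
      have hdist : dist e p < δ := by
        rw [Real.dist_eq, abs_of_neg (by linarith)]
        rw [hxdef] at hxe
        linarith
      have := hδ2 hdist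
      rw [Real.dist_eq] at this
      have := abs_lt.1 this
      rw [← hHe]
      linarith [this.2]
    · rw [limFlux_eq_self H A x hcx]
      have hdist : dist x p < δ := by
        rw [Real.dist_eq, hxdef, abs_of_neg (by linarith)]
        linarith
      have := hδ2 hdist
      rw [Real.dist_eq] at this
      have := abs_lt.1 this
      linarith [this.2]

lemma right_pt (hH : Continuous H) (hcoer : Coercive H) (A : Set ℝ) (hA : IsSetLimiter H A)
    (p : ℝ) (ε : ℝ) (hε : 0 < ε) :
    ∃ x, p < x ∧ limFlux H A p - ε ≤ limFlux H A x := by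
  by_cases h1 : ∃ a, a ∈ A ∧ p ∈ ccMM H a ∧ (p : EReal) < pplus H a
  · obtain ⟨a, ha, hpa, hlt⟩ := h1
    have hex : ∃ x : ℝ, p < x ∧ (x : EReal) ≤ pplus H a := by
      by_cases htop : pplus H a = ⊤
      · exact ⟨p + 1, by linarith, htop ▸ le_top⟩
      · have hne_bot : pplus H a ≠ ⊥ := ((EReal.bot_lt_coe a).trans_le (self_le_pplus H a)).ne'
        set u := (pplus H a).toReal with hu
        have hue : ((u : ℝ) : EReal) = pplus H a := EReal.coe_toReal htop hne_bot
        have hpu : p < u := by exact_mod_cast hue ▸ hlt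
        exact ⟨(p + u) / 2, by linarith, by rw [← hue]; exact_mod_cast (by linarith : (p + u) / 2 ≤ u)⟩
    obtain ⟨x, hx1, hx2⟩ := hex
    have hxa : x ∈ ccMM H a := ⟨hpa.1.trans hx1.le, hx2⟩
    refine ⟨x, hx1, ?_⟩
    rw [limFlux_eq H hH hcoer A hA x a ha hxa, limFlux_eq H hH hcoer A hA p a ha hpa]
    linarith
  · push_neg at h1
    have hFp : limFlux H A p = H p := by
      by_cases hc : ∃ c, c ∈ A ∧ p ∈ ccMM H c
      · obtain ⟨a, ha, hpa⟩ := hc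
        rw [limFlux_eq H hH hcoer A hA p a ha hpa]
        have heq : pplus H a = (p : EReal) := le_antisymm (h1 a ha hpa) hpa.2
        have hap : a ≤ p := by exact_mod_cast heq ▸ self_le_pplus H a
        rcases eq_or_lt_of_le hap with h | h
        · rw [h]
        · exact (H_pplus H hH a p h heq).symm
      · exact limFlux_eq_self H A p hc
    obtain ⟨δ, hδ, hδ2⟩ := Metric.continuousAt_iff.1 hH.continuousAt ε hε
    set x := p + δ / 2 with hxdef
    have hxp : p < x := by rw [hxdef]; linarith
    refine ⟨x, hxp, ?_⟩
    rw [hFp]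
    by_cases hcx : ∃ c, c ∈ A ∧ x ∈ ccMM H c
    · obtain ⟨c, hc, hxc⟩ := hcx
      rw [limFlux_eq H hH hcoer A hA x c hc hxc]
      have hclt : p < pminus H c := by
        by_contra hcon
        push_neg at hcon
        have hpc : p ∈ ccMM H c := ⟨hcon, le_trans (by exact_mod_cast hxp.le) hxc.2⟩
        have hle : pplus H c ≤ (p : EReal) := h1 c hc hpc
        have : (x : EReal) ≤ (p : EReal) := hxc.2.trans hle
        exact absurd (by exact_mod_cast this) (not_le.2 hxp)
      set e := pminus H c with he
      have hex : e ≤ x := hxc.1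
      have hHe : H e = H c := H_pminus H hH hcoer c
      have hdist : dist e p < δ := by
        rw [Real.dist_eq, abs_of_pos (by linarith)]
        rw [hxdef] at hex
        linarith
      have := hδ2 hdist
      rw [Real.dist_eq] at this
      have := abs_lt.1 this
      rw [← hHe]
      linarith [this.1]
    · rw [limFlux_eq_self H A x hcx]
      have hdist : dist x p < δ := by
        rw [Real.dist_eq, hxdef, abs_of_pos (by linarith)]
        linarith
      have := hδ2 hdist
      rw [Real.dist_eq] at this
      have := abs_lt.1 this
      linarith [this.1]

lemma limFlux_continuous (hH : Continuous H) (hcoer : Coercive H) (A : Set ℝ)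
    (hA : IsSetLimiter H A) : Continuous (limFlux H A) := by
  have hanti := limFlux_antitone H hH hcoer A hA
  rw [continuous_iff_continuousAt]
  intro p
  rw [Metric.continuousAt_iff]
  intro ε hε
  obtain ⟨x₁, hx₁, hF₁⟩ := left_pt H hH hcoer A hA p (ε / 2) (by linarith)
  obtain ⟨x₂, hx₂, hF₂⟩ := right_pt H hH hcoer A hA p (ε / 2) (by linarith)
  refine ⟨min (p - x₁) (x₂ - p), lt_min (by linarith) (by linarith), ?_⟩
  intro y hy
  rw [Real.dist_eq] at hy
  have hy1 : x₁ < y := by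
    have := (abs_lt.1 hy).1
    have := min_le_left (p - x₁) (x₂ - p)
    linarith
  have hy2 : y < x₂ := by
    have := (abs_lt.1 hy).2
    have := min_le_right (p - x₁) (x₂ - p)
    linarith
  have hub : limFlux H A y ≤ limFlux H A p + ε / 2 := (hanti hy1.le).trans hF₁
  have hlb : limFlux H A p - ε / 2 ≤ limFlux H A y := hF₂.trans (hanti hy2.le)
  rw [Real.dist_eq, abs_lt]
  constructor <;> linarith

end Main

theorem stmt3 (H : ℝ → ℝ) (hH : Continuous H) (hcoer : Coercive H)
    (A : Set ℝ) (hA : IsSetLimiter H A) :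
    (∀ p : ℝ, ∀ a ∈ A, ∀ b ∈ A, p ∈ ccMM H a → p ∈ ccMM H b → H a = H b) ∧
    Continuous (limFlux H A) ∧ Antitone (limFlux H A) :=
  ⟨fun p a ha b hb hpa hpb => wd H hH hcoer A hA p a ha b hb hpa hpb,
    limFlux_continuous H hH hcoer A hA, limFlux_antitone H hH hcoer A hA⟩
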